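/- Let X be symmetric positive definite with λ_min(X) > 0 and let D be diagonal with 0 < d ≤ D_{ii} ≤ k for all i, where k < 2/λ_max(X). Then the spectral radius of I - X·D is at most max(1 - d·λ_min(X), k·λ_max(X) - 1) < 1, giving an explicit contraction-rate bound for the linearized voltage dynamics. -/

import Mathlib

open Matrix
open scoped ComplexOrder

lemma real_spectrum_of_map {N : ℕ} (X : Matrix (Fin N) (Fin N) ℝ) (c : ℝ)
    (h : (c : ℂ) ∈ spectrum ℂ (X.map Complex.ofReal)) : c ∈ spectrum ℝ X := by
  rw [spectrum.mem_iff] at h ⊢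
  contrapose! h
  rw [Matrix.isUnit_iff_isUnit_det] at h ⊢
  have key : algebraMap ℂ (Matrix (Fin N) (Fin N) ℂ) (c : ℂ) - X.map Complex.ofReal
      = (algebraMap ℝ (Matrix (Fin N) (Fin N) ℝ) c - X).map Complex.ofRealHom := by
    ext i j
    simp [Matrix.map_apply, Matrix.algebraMap_matrix_apply]
    split_ifs <;> simp
  rw [key]
  have hdet : (((algebraMap ℝ (Matrix (Fin N) (Fin N) ℝ)) c - X).map ⇑Complex.ofRealHom).det
      = Complex.ofRealHom (((algebraMap ℝ (Matrix (Fin N) (Fin N) ℝ)) c - X).det) :=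
    (Complex.ofRealHom.map_det _).symm
  rw [hdet]
  exact isUnit_iff_ne_zero.mpr (by simpa using isUnit_iff_ne_zero.mp h)

lemma herm_map {N : ℕ} {X : Matrix (Fin N) (Fin N) ℝ} (hX : X.IsHermitian) :
    (X.map Complex.ofReal).IsHermitian := by
  ext i j
  have h2 : X j i = X i j := by
    have := congrFun (congrFun hX i) j
    simpa [Matrix.conjTranspose_apply] using this
  simp [Matrix.conjTranspose_apply, Matrix.map_apply, h2]

lemma herm_algebraMap {N : ℕ} (c : ℝ) :
    (algebraMap ℝ (Matrix (Fin N) (Fin N) ℂ) c).IsHermitian := by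
  ext i j
  simp [Matrix.conjTranspose_apply, Matrix.algebraMap_matrix_apply]
  split_ifs with h1 h2 h3 <;> simp_all [eq_comm]

lemma posSemidef_lower {N : ℕ} (X : Matrix (Fin N) (Fin N) ℝ) (hX : X.IsHermitian)
    (lmin : ℝ) (hmin : ∀ μ ∈ spectrum ℝ X, lmin ≤ μ) :
    (X.map Complex.ofReal - algebraMap ℝ (Matrix (Fin N) (Fin N) ℂ) lmin).PosSemidef := by
  have hH : (X.map Complex.ofReal - algebraMap ℝ (Matrix (Fin N) (Fin N) ℂ) lmin).IsHermitian :=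
    (herm_map hX).sub (herm_algebraMap lmin)
  apply hH.posSemidef_iff_eigenvalues_nonneg.mpr
  intro i
  rw [Pi.zero_apply]
  have ht := hH.eigenvalues_mem_spectrum_real i
  rw [← spectrum.sub_singleton_eq] at ht
  obtain ⟨x, hx, y, hy, hxy⟩ := Set.mem_sub.mp ht
  rcases Set.mem_singleton_iff.mp hy with rfl
  have hx' : (x : ℂ) ∈ spectrum ℂ (X.map Complex.ofReal) := by
    have := spectrum.algebraMap_mem ℂ hx
    simpa using this
  have := hmin x (real_spectrum_of_map X x hx')
  linarith [hxy ▸ sub_nonneg.mpr this]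

lemma posSemidef_upper {N : ℕ} (X : Matrix (Fin N) (Fin N) ℝ) (hX : X.IsHermitian)
    (lmax : ℝ) (hmax : ∀ μ ∈ spectrum ℝ X, μ ≤ lmax) :
    (algebraMap ℝ (Matrix (Fin N) (Fin N) ℂ) lmax - X.map Complex.ofReal).PosSemidef := by
  have hH : (algebraMap ℝ (Matrix (Fin N) (Fin N) ℂ) lmax - X.map Complex.ofReal).IsHermitian :=
    (herm_algebraMap lmax).sub (herm_map hX)
  apply hH.posSemidef_iff_eigenvalues_nonneg.mpr
  intro i
  rw [Pi.zero_apply]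
  have ht := hH.eigenvalues_mem_spectrum_real i
  rw [← spectrum.singleton_sub_eq] at ht
  obtain ⟨x, hx, y, hy, hxy⟩ := Set.mem_sub.mp ht
  rcases Set.mem_singleton_iff.mp hx with rfl
  have hy' : (y : ℂ) ∈ spectrum ℂ (X.map Complex.ofReal) := by
    have := spectrum.algebraMap_mem ℂ hy
    simpa using this
  have := hmax y (real_spectrum_of_map X y hy')
  linarith [hxy ▸ sub_nonneg.mpr this]

/-- Explicit contraction-rate bound: if `D` is diagonal with
`0 < d ≤ D_ii ≤ k` and `k < 2/λ_max(X)`, then every eigenvalue of `I - X·D`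
has modulus at most `max (1 - d·λ_min(X)) (k·λ_max(X) - 1)`, which is
strictly less than 1. -/
theorem explicit_contraction_bound {N : ℕ} (X : Matrix (Fin N) (Fin N) ℝ)
    (hX : X.PosDef) (lmin lmax : ℝ)
    (hminmem : lmin ∈ spectrum ℝ X) (hmin : ∀ μ ∈ spectrum ℝ X, lmin ≤ μ)
    (hmaxmem : lmax ∈ spectrum ℝ X) (hmax : ∀ μ ∈ spectrum ℝ X, μ ≤ lmax)
    (hlmin : 0 < lmin)
    (D : Fin N → ℝ) (d k : ℝ) (hd : 0 < d)
    (hD : ∀ i, d ≤ D i ∧ D i ≤ k) (hk : k < 2 / lmax) :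
    (∀ lam : ℂ,
      lam ∈ spectrum ℂ (((1 : Matrix (Fin N) (Fin N) ℝ)
          - X * Matrix.diagonal D).map Complex.ofReal) →
      ‖lam‖ ≤ max (1 - d * lmin) (k * lmax - 1)) ∧
    max (1 - d * lmin) (k * lmax - 1) < 1 := by
  classical
  have hlmax : 0 < lmax := lt_of_lt_of_le hlmin (hmin lmax hmaxmem)
  have hklmax : k * lmax < 2 := (lt_div_iff₀ hlmax).mp hk
  have hpart2 : max (1 - d * lmin) (k * lmax - 1) < 1 := by
    apply max_lt
    · nlinarith
    · linarith
  refine ⟨?_, hpart2⟩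
  intro lam hmem
  set Xc := X.map Complex.ofReal with hXcdef
  have hXsym : X.IsHermitian := hX.1
  have hXcH : Xc.IsHermitian := herm_map hXsym
  have hDpos : ∀ i, 0 < D i := fun i => lt_of_lt_of_le hd (hD i).1
  set s : Fin N → ℝ := fun i => Real.sqrt (D i) with hsdef
  have hspos : ∀ i, 0 < s i := fun i => Real.sqrt_pos.mpr (hDpos i)
  have hss : ∀ i, s i * s i = D i := fun i => Real.mul_self_sqrt (hDpos i).le
  set Sc : Matrix (Fin N) (Fin N) ℂ := Matrix.diagonal (fun i => (s i : ℂ)) with hScdef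
  set Dc : Matrix (Fin N) (Fin N) ℂ := Matrix.diagonal (fun i => (D i : ℂ)) with hDcdef
  have hScSc : Sc * Sc = Dc := by
    rw [hScdef, hDcdef, Matrix.diagonal_mul_diagonal]
    have hfun : (fun i => (s i : ℂ) * s i) = fun i => (D i : ℂ) := by
      funext i; rw [← hss i]; push_cast; ring
    rw [hfun]
  set Ac : Matrix (Fin N) (Fin N) ℂ := Sc * Xc * Sc with hAcdef
  -- the matrix in coordinates
  have hMc : ((1 : Matrix (Fin N) (Fin N) ℝ) - X * Matrix.diagonal D).map Complex.ofReal
      = 1 - Xc * Dc := by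
    ext i j
    simp only [Matrix.map_apply, Matrix.sub_apply, Matrix.one_apply, Matrix.mul_diagonal,
      hXcdef, hDcdef]
    push_cast [apply_ite Complex.ofReal]
    ring
  have hScUnit : IsUnit Sc := by
    rw [Matrix.isUnit_iff_isUnit_det, Matrix.det_diagonal, isUnit_iff_ne_zero]
    exact Finset.prod_ne_zero_iff.mpr (fun i _ => by exact_mod_cast (hspos i).ne')
  have hkey : Sc * (1 - Xc * Dc) = (1 - Ac) * Sc := by
    rw [hAcdef, ← hScSc]; noncomm_ring
  have hconj : (1 : Matrix (Fin N) (Fin N) ℂ) - Xc * Dc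
      = (↑(hScUnit.unit⁻¹) : Matrix (Fin N) (Fin N) ℂ) * (1 - Ac)
        * (hScUnit.unit : Matrix (Fin N) (Fin N) ℂ) := by
    rw [mul_assoc]
    calc (1 : Matrix (Fin N) (Fin N) ℂ) - Xc * Dc
        = ↑hScUnit.unit⁻¹ * (↑hScUnit.unit * (1 - Xc * Dc)) :=
          (Units.inv_mul_cancel_left _ _).symm
      _ = ↑hScUnit.unit⁻¹ * ((1 - Ac) * ↑hScUnit.unit) := by
          have h9 : (↑hScUnit.unit : Matrix (Fin N) (Fin N) ℂ) * (1 - Xc * Dc)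
              = (1 - Ac) * (↑hScUnit.unit : Matrix (Fin N) (Fin N) ℂ) := by
            rw [IsUnit.unit_spec]
            exact hkey
          rw [h9]
  have hspec : lam ∈ spectrum ℂ ((1 : Matrix (Fin N) (Fin N) ℂ) - Ac) := by
    rw [hMc, hconj, spectrum.units_conjugate'] at hmem
    exact hmem
  -- eigenvector
  have hnotunit : ¬ IsUnit (algebraMap ℂ (Matrix (Fin N) (Fin N) ℂ) lam - (1 - Ac)) :=
    spectrum.mem_iff.mp hspec
  have hdet0 : (algebraMap ℂ (Matrix (Fin N) (Fin N) ℂ) lam - (1 - Ac)).det = 0 := by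
    by_contra h
    exact hnotunit ((Matrix.isUnit_iff_isUnit_det _).mpr (isUnit_iff_ne_zero.mpr h))
  obtain ⟨v, hv0, hveq⟩ := Matrix.exists_mulVec_eq_zero_iff.mpr hdet0
  have hAv : Ac *ᵥ v = (1 - lam) • v := by
    funext i
    have h0 := congrFun hveq i
    simp only [Matrix.sub_mulVec, Algebra.algebraMap_eq_smul_one, Matrix.smul_mulVec,
      Matrix.one_mulVec, Pi.sub_apply, Pi.smul_apply, Pi.zero_apply, smul_eq_mul] at h0 ⊢
    linear_combination h0
  set w : Fin N → ℂ := fun i => (s i : ℂ) * v i with hwdef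
  have hwv : Sc *ᵥ v = w := by
    funext i; rw [hScdef]; exact Matrix.mulVec_diagonal _ _ _
  set q : ℂ := star w ⬝ᵥ (Xc *ᵥ w) with hqdef
  have hq1 : star v ⬝ᵥ (Ac *ᵥ v) = q := by
    rw [hAcdef, ← Matrix.mulVec_mulVec, ← Matrix.mulVec_mulVec, hwv,
      Matrix.dotProduct_mulVec (star v) Sc, hqdef]
    congr 1
    funext i
    rw [hScdef, Matrix.vecMul_diagonal]
    simp [hwdef, mul_comm]
  set nv : ℝ := ∑ i, Complex.normSq (v i) with hnvdef
  have hvv : star v ⬝ᵥ v = (nv : ℂ) := by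
    rw [hnvdef]
    push_cast
    apply Finset.sum_congr rfl
    intro i _
    simp [Complex.normSq_eq_conj_mul_self]
  set nw : ℝ := ∑ i, D i * Complex.normSq (v i) with hnwdef
  have hww : star w ⬝ᵥ w = (nw : ℂ) := by
    rw [hnwdef]
    push_cast
    apply Finset.sum_congr rfl
    intro i _
    simp only [Pi.star_apply, hwdef, Complex.normSq_eq_conj_mul_self]
    rw [← hss i]
    push_cast
    ring_nf
    simp [Complex.conj_ofReal]
    ring
  have hnv : 0 < nv := by
    obtain ⟨i, hi⟩ := Function.ne_iff.mp hv0
    exact Finset.sum_pos' (fun j _ => Complex.normSq_nonneg _)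
      ⟨i, Finset.mem_univ i, Complex.normSq_pos.mpr hi⟩
  have hmain : (1 - lam) * (nv : ℂ) = q := by
    rw [← hvv, ← hq1, hAv]
    simp [dotProduct_smul, smul_eq_mul]
  -- q is real
  have hstar : star q = q := by
    rw [hqdef]
    conv_lhs => rw [Matrix.star_dotProduct, star_star]
    rw [Matrix.star_mulVec, hXcH, ← Matrix.dotProduct_mulVec]
  have hqre : q = ((q.re : ℝ) : ℂ) := by
    have h2 : (starRingEnd ℂ) q = q := hstar
    exact (Complex.conj_eq_iff_re.mp h2).symm
  -- quadratic form bounds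
  have hb1 : lmin * nw ≤ q.re := by
    have h0 := (posSemidef_lower X hXsym lmin hmin).re_dotProduct_nonneg w
    have hexp : star w ⬝ᵥ ((X.map Complex.ofReal
          - algebraMap ℝ (Matrix (Fin N) (Fin N) ℂ) lmin) *ᵥ w)
        = q - ((lmin * nw : ℝ) : ℂ) := by
      rw [Matrix.sub_mulVec, dotProduct_sub, ← hXcdef, ← hqdef]
      congr 1
      rw [IsScalarTower.algebraMap_apply ℝ ℂ (Matrix (Fin N) (Fin N) ℂ),
        Algebra.algebraMap_eq_smul_one, Matrix.smul_mulVec, Matrix.one_mulVec,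
        dotProduct_smul, hww]
      push_cast
      simp [smul_eq_mul]
    rw [hexp] at h0
    simp only [RCLike.re_to_complex, Complex.sub_re, Complex.ofReal_re] at h0
    linarith
  have hb2 : q.re ≤ lmax * nw := by
    have h0 := (posSemidef_upper X hXsym lmax hmax).re_dotProduct_nonneg w
    have hexp : star w ⬝ᵥ ((algebraMap ℝ (Matrix (Fin N) (Fin N) ℂ) lmax
          - X.map Complex.ofReal) *ᵥ w)
        = ((lmax * nw : ℝ) : ℂ) - q := by
      rw [Matrix.sub_mulVec, dotProduct_sub, ← hXcdef, ← hqdef]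
      congr 1
      rw [IsScalarTower.algebraMap_apply ℝ ℂ (Matrix (Fin N) (Fin N) ℂ),
        Algebra.algebraMap_eq_smul_one, Matrix.smul_mulVec, Matrix.one_mulVec,
        dotProduct_smul, hww]
      push_cast
      simp [smul_eq_mul]
    rw [hexp] at h0
    simp only [RCLike.re_to_complex, Complex.sub_re, Complex.ofReal_re] at h0
    linarith
  have hnw1 : d * nv ≤ nw := by
    rw [hnwdef, hnvdef, Finset.mul_sum]
    exact Finset.sum_le_sum fun i _ =>
      mul_le_mul_of_nonneg_right (hD i).1 (Complex.normSq_nonneg _)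
  have hnw2 : nw ≤ k * nv := by
    rw [hnwdef, hnvdef, Finset.mul_sum]
    exact Finset.sum_le_sum fun i _ =>
      mul_le_mul_of_nonneg_right (hD i).2 (Complex.normSq_nonneg _)
  have hlamre : lam = ((1 - q.re / nv : ℝ) : ℂ) := by
    have hnvne : (nv : ℂ) ≠ 0 := by exact_mod_cast hnv.ne'
    have h1 : (1 - lam) * (nv : ℂ) = ((q.re : ℝ) : ℂ) := by rw [← hqre]; exact hmain
    push_cast
    field_simp at h1 ⊢
    linear_combination -h1
  rw [hlamre, Complex.norm_real, Real.norm_eq_abs]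
  have hr1 : d * lmin * nv ≤ q.re := by nlinarith [hb1, hnw1, hlmin.le]
  have hr2 : q.re ≤ k * lmax * nv := by nlinarith [hb2, hnw2, hlmax.le]
  have hq1' : d * lmin ≤ q.re / nv := (le_div_iff₀ hnv).mpr (by linarith)
  have hq2' : q.re / nv ≤ k * lmax := (div_le_iff₀ hnv).mpr (by linarith)
  rcases abs_cases (1 - q.re / nv) with ⟨heq, _⟩ | ⟨heq, _⟩ <;> rw [heq]
  · exact le_max_of_le_left (by linarith)
  · exact le_max_of_le_right (by linarith)
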